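/- Let W be the symmetric group S_{n+1} with simple reflections s_1,...,s_n (s_i swaps i and i+1). Fix m,l with m ≤ l and n ≥ 2m+1. Let w_c = (s_n s_{n-1} ⋯ s_{m+2})(s_1 s_2 ⋯ s_m) s_{m+1}. Then for every k with 1 ≤ k ≤ m+1, the word (w_c)^k obtained by concatenating k copies of this expression is a reduced expression; in particular ℓ((w_c)^{m+1}) = n(m+1). -/

import Mathlib

set_option maxHeartbeats 1000000

namespace RPWC

variable {N : ℕ}

/-- The set of inversions of a permutation of `Fin N`. -/
def invS (σ : Equiv.Perm (Fin N)) : Finset (Fin N × Fin N) :=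
  Finset.univ.filter fun p => p.1 < p.2 ∧ σ p.2 < σ p.1

lemma invS_one : (invS (1 : Equiv.Perm (Fin N))) = ∅ := by
  ext p; rw [invS, Finset.mem_filter]; simp only [invS, Finset.mem_filter, Finset.mem_univ, true_and,
    Equiv.Perm.one_apply, Finset.notMem_empty, iff_false]
  rintro ⟨h1, h2⟩; exact absurd h2 (not_lt_of_gt h1)

lemma invS_mul_swap_le (σ : Equiv.Perm (Fin N)) (a b : Fin N) (hab : (a : ℕ) + 1 = (b : ℕ)) :
    (invS (σ * Equiv.swap a b)).card ≤ (invS σ).card + 1 := by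
  set s := Equiv.swap a b with hs
  have hss : ∀ x : Fin N, s (s x) = x := fun x => Equiv.swap_apply_self a b x
  have hsub : invS (σ * s) ⊆ insert (a, b) ((invS σ).image fun p => (s p.1, s p.2)) := by
    rw [Finset.subset_iff]; intro p hp
    rw [invS, Finset.mem_filter] at hp
    simp only [invS, Finset.mem_filter, Finset.mem_univ, true_and, Equiv.Perm.mul_apply] at hp
    obtain ⟨h1, h2⟩ := hp
    by_cases hpa : p = (a, b)
    · simp [hpa]
    · have hmono : s p.1 < s p.2 := by
        have hne : ¬(p.1 = a ∧ p.2 = b) := by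
          intro ⟨u, v⟩; exact hpa (Prod.ext u v)
        simp only [hs, Equiv.swap_apply_def]
        split_ifs with e1 e2 e3 e4 e5 e6 <;>
        · first
          | (exfalso; subst_vars; omega)
          | (simp only [Fin.lt_def] at h1 ⊢
             simp only [Fin.ext_iff] at * <;> omega)
      refine Finset.mem_insert_of_mem ?_
      rw [Finset.mem_image]
      refine ⟨(s p.1, s p.2), ?_, show (s (s p.1), s (s p.2)) = p by rw [hss, hss]⟩
      simp only [invS, Finset.mem_filter, Finset.mem_univ, true_and]
      exact ⟨hmono, h2⟩
  calc (invS (σ * s)).card ≤ (insert (a, b) ((invS σ).image fun p => (s p.1, s p.2))).card :=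
        Finset.card_le_card hsub
    _ ≤ ((invS σ).image fun p => (s p.1, s p.2)).card + 1 := Finset.card_insert_le _ _
    _ ≤ (invS σ).card + 1 := Nat.add_le_add_right Finset.card_image_le 1

variable {n : ℕ}

/-- The adjacent transposition corresponding to a simple reflection. -/
def t (i : Fin n) : Equiv.Perm (Fin (n + 1)) := Equiv.swap i.castSucc i.succ

lemma t_inv (i : Fin n) : (t i)⁻¹ = t i := by rw [t, Equiv.swap_inv]

lemma swap3 {N : ℕ} (a b c : Fin N) (hab : a ≠ b) (hbc : b ≠ c) (hac : a ≠ c) :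
    (Equiv.swap a b * Equiv.swap b c) ^ 3 = 1 := by
  set σ := Equiv.swap a b * Equiv.swap b c with hσ
  have ha : σ a = b := by
    rw [hσ, Equiv.Perm.mul_apply, Equiv.swap_apply_of_ne_of_ne hab hac,
      Equiv.swap_apply_left]
  have hb : σ b = c := by
    rw [hσ, Equiv.Perm.mul_apply, Equiv.swap_apply_left,
      Equiv.swap_apply_of_ne_of_ne (Ne.symm hac) (Ne.symm hbc)]
  have hc : σ c = a := by
    rw [hσ, Equiv.Perm.mul_apply, Equiv.swap_apply_right, Equiv.swap_apply_right]
  have hother : ∀ x, x ≠ a → x ≠ b → x ≠ c → σ x = x := by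
    intro x hxa hxb hxc
    rw [hσ, Equiv.Perm.mul_apply, Equiv.swap_apply_of_ne_of_ne hxb hxc,
      Equiv.swap_apply_of_ne_of_ne hxa hxb]
  have h3 : (3 : ℕ) = 2 + 1 := rfl
  ext x
  rw [h3, pow_succ, pow_two]
  simp only [Equiv.Perm.mul_apply, Equiv.Perm.one_apply]
  by_cases hxa : x = a
  · rw [hxa, ha, hb, hc]
  · by_cases hxb : x = b
    · rw [hxb, hb, hc, ha]
    · by_cases hxc : x = c
      · rw [hxc, hc, ha, hb]
      · rw [hother x hxa hxb hxc, hother x hxa hxb hxc, hother x hxa hxb hxc]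

lemma adj3 (i j : Fin n) (h : (i : ℕ) + 1 = (j : ℕ)) : (t i * t j) ^ 3 = 1 := by
  have he : i.succ = j.castSucc := by
    simp only [Fin.ext_iff, Fin.val_succ, Fin.coe_castSucc]; omega
  rw [t, t, ← he]
  exact swap3 i.castSucc i.succ j.succ
    (by simp only [ne_eq, Fin.ext_iff, Fin.val_succ, Fin.coe_castSucc]; omega)
    (by simp only [ne_eq, Fin.ext_iff, Fin.val_succ, Fin.coe_castSucc]; omega)
    (by simp only [ne_eq, Fin.ext_iff, Fin.val_succ, Fin.coe_castSucc]; omega)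

lemma liftable (n : ℕ) : CoxeterMatrix.IsLiftable (CoxeterMatrix.Aₙ n) (t (n := n)) := by
  intro i j
  have hAval : (CoxeterMatrix.Aₙ n) i j =
      if i = j then 1 else if (j : ℕ) + 1 = i ∨ (i : ℕ) + 1 = j then 3 else 2 := rfl
  rw [hAval]
  by_cases hij : i = j
  · subst hij
    simp [t, pow_one, Equiv.swap_mul_self]
  · rw [if_neg hij]
    by_cases hadj : (j : ℕ) + 1 = i ∨ (i : ℕ) + 1 = j
    · rw [if_pos hadj]
      rcases hadj with h | h
      · have h1 := adj3 j i h
        have : t i * t j = (t j * t i)⁻¹ := by rw [mul_inv_rev, t_inv, t_inv]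
        rw [this, inv_pow, h1, inv_one]
      · exact adj3 i j h
    · rw [if_neg hadj]
      push_neg at hadj
      have hd : ∀ x : Fin (n+1), t i x = x ∨ t j x = x := by
        intro x
        by_cases h1 : x = i.castSucc
        · right; rw [t]; apply Equiv.swap_apply_of_ne_of_ne <;>
          · subst h1; simp only [ne_eq, Fin.ext_iff, Fin.val_succ, Fin.coe_castSucc]
            rcases hadj with ⟨u, v⟩
            have : (i : ℕ) ≠ j := fun hh => hij (Fin.ext hh)
            omega
        · by_cases h2 : x = i.succ
          · right; rw [t]; apply Equiv.swap_apply_of_ne_of_ne <;>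
            · subst h2; simp only [ne_eq, Fin.ext_iff, Fin.val_succ, Fin.coe_castSucc]
              rcases hadj with ⟨u, v⟩
              have : (i : ℕ) ≠ j := fun hh => hij (Fin.ext hh)
              omega
          · left; rw [t]; exact Equiv.swap_apply_of_ne_of_ne h1 h2
      have hcomm : Commute (t i) (t j) := Equiv.Perm.Disjoint.commute hd
      rw [pow_two, ← mul_assoc, mul_assoc (t i), ← hcomm.eq, ← mul_assoc, mul_assoc]
      rw [t, t, Equiv.swap_mul_self, Equiv.swap_mul_self, mul_one]

lemma t_apply (i : Fin n) (x : Fin (n + 1)) :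
    (t i x : ℕ) = if (x : ℕ) = i then (i : ℕ) + 1
      else if (x : ℕ) = (i : ℕ) + 1 then i else x := by
  by_cases h1 : x = i.castSucc
  · subst h1
    rw [t, Equiv.swap_apply_left]
    simp [Fin.coe_castSucc, Fin.val_succ]
  · by_cases h2 : x = i.succ
    · subst h2
      rw [t, Equiv.swap_apply_right]
      have hne : (i.succ : ℕ) ≠ i := by simp [Fin.val_succ]
      simp [Fin.val_succ, hne]
    · rw [t, Equiv.swap_apply_of_ne_of_ne h1 h2]
      have e1 : ((x : ℕ) = i) = False := by
        simp only [eq_iff_iff, iff_false]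
        exact fun h => h1 (Fin.ext (by simp [Fin.coe_castSucc, h]))
      have e2 : ((x : ℕ) = (i : ℕ) + 1) = False := by
        simp only [eq_iff_iff, iff_false]
        exact fun h => h2 (Fin.ext (by simp [Fin.val_succ, h]))
      rw [if_neg (by simp only [eq_iff_iff, iff_false] at e1; exact e1),
        if_neg (by simp only [eq_iff_iff, iff_false] at e2; exact e2)]

/-- The one-line formula for `(w_c)^r`, `0`-indexed. -/
def g (n m r x : ℕ) : ℕ :=
  if x + r ≤ m then x + r
  else if x ≤ m then n + m + 1 - x - r
  else if x ≤ m + r then m + r - x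
  else x - r

lemma g_le (m r x : ℕ) (hn : 2 * m + 1 ≤ n) (hr : r ≤ m + 1) (hx : x ≤ n) :
    g n m r x ≤ n := by
  unfold g; split_ifs <;> omega

lemma g_comp (m r x : ℕ) (hn : 2 * m + 1 ≤ n) (hr : r ≤ m) (hx : x ≤ n) :
    g n m r (g n m 1 x) = g n m (r + 1) x := by
  unfold g; split_ifs <;> omega

lemma descProd {n : ℕ} : ∀ (d : ℕ), d ≤ n → ∀ (F : Fin d → Fin n),
    (∀ j, (F j : ℕ) = n - 1 - (j : ℕ)) → ∀ x : Fin (n + 1),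
    (((List.ofFn fun j => t (F j)).prod) x : ℕ) =
      if (x : ℕ) = n - d then n else if n - d < (x : ℕ) then (x : ℕ) - 1 else (x : ℕ) := by
  intro d
  induction d with
  | zero =>
    intro _ F hF x
    have hx := x.isLt
    simp only [List.ofFn_zero, List.prod_nil, Equiv.Perm.one_apply]
    split_ifs <;> omega
  | succ d IH =>
    intro hd F hF x
    have hx := x.isLt
    rw [List.ofFn_succ', List.prod_concat, Equiv.Perm.mul_apply]
    have hIH := IH (by omega) (fun j => F j.castSucc)
      (fun j => by rw [hF j.castSucc, Fin.coe_castSucc]) ((t (F (Fin.last d))) x)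
    rw [hIH]
    have ht := t_apply (F (Fin.last d)) x
    rw [hF (Fin.last d), Fin.val_last] at ht
    rw [ht]
    split_ifs <;> omega

lemma ascProd {n : ℕ} : ∀ (d : ℕ), d ≤ n → ∀ (F : Fin d → Fin n),
    (∀ j, (F j : ℕ) = (j : ℕ)) → ∀ x : Fin (n + 1),
    (((List.ofFn fun j => t (F j)).prod) x : ℕ) =
      if (x : ℕ) = d then 0 else if (x : ℕ) < d then (x : ℕ) + 1 else (x : ℕ) := by
  intro d
  induction d with
  | zero =>
    intro _ F hF x
    have hx := x.isLt
    simp only [List.ofFn_zero, List.prod_nil, Equiv.Perm.one_apply]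
    split_ifs <;> omega
  | succ d IH =>
    intro hd F hF x
    have hx := x.isLt
    rw [List.ofFn_succ', List.prod_concat, Equiv.Perm.mul_apply]
    have hIH := IH (by omega) (fun j => F j.castSucc)
      (fun j => by rw [hF j.castSucc, Fin.coe_castSucc]) ((t (F (Fin.last d))) x)
    rw [hIH]
    have ht := t_apply (F (Fin.last d)) x
    rw [hF (Fin.last d), Fin.val_last] at ht
    rw [ht]
    split_ifs <;> omega

/-- Lower bound on the inversions of the permutation `g n m (m+1)`. -/
lemma inv_lb {n m : ℕ} (hn : 2 * m + 1 ≤ n) (σ : Equiv.Perm (Fin (n + 1)))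
    (hσ : ∀ x : Fin (n + 1), (σ x : ℕ) = g n m (m + 1) (x : ℕ)) :
    (m + 1) * n ≤ (invS σ).card := by
  classical
  have hcard : ((Finset.univ : Finset (Fin (m+1) × Fin n))).card = (m + 1) * n := by
    simp
  rw [← hcard]
  apply Finset.card_le_card_of_injOn
    (fun p => if h : (p.2 : ℕ) + (p.1 : ℕ) < n then
        ((⟨(p.1 : ℕ), by have := p.1.isLt; omega⟩ : Fin (n+1)),
         (⟨(p.1 : ℕ) + 1 + (p.2 : ℕ), by omega⟩ : Fin (n+1)))
      else
        ((⟨m + 1 + ((p.2 : ℕ) + (p.1 : ℕ) - n), by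
            have h1 := p.1.isLt; have h2 := p.2.isLt; omega⟩ : Fin (n+1)),
         (⟨m + 1 + (p.1 : ℕ), by have h1 := p.1.isLt; omega⟩ : Fin (n+1))))
  · intro p _
    have a1 := p.1.isLt
    have a2 := p.2.isLt
    dsimp only
    split_ifs with h
    · simp only [invS, Finset.mem_coe, Finset.mem_filter, Finset.mem_univ, true_and]
      constructor
      · rw [Fin.lt_def]; dsimp only; omega
      · rw [Fin.lt_def, hσ, hσ]; dsimp only
        unfold g; split_ifs <;> omega
    · simp only [invS, Finset.mem_coe, Finset.mem_filter, Finset.mem_univ, true_and]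
      constructor
      · rw [Fin.lt_def]; dsimp only; omega
      · rw [Fin.lt_def, hσ, hσ]; dsimp only
        unfold g; split_ifs <;> omega
  · intro p hp q hq heq
    have a1 := p.1.isLt
    have a2 := p.2.isLt
    have b1 := q.1.isLt
    have b2 := q.2.isLt
    dsimp only at heq
    split_ifs at heq with h1 h2 h2 <;>
    · simp only [Prod.mk.injEq, Fin.mk.injEq] at heq
      obtain ⟨e1, e2⟩ := heq
      refine Prod.ext (Fin.ext ?_) (Fin.ext ?_) <;> omega

end RPWC

/-- In the Weyl group of type `Aₙ` (the symmetric group `S_{n+1}` with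
simple reflections `s₁, …, sₙ`, `sᵢ = (i, i+1)`), fix `m ≤ l` with `n = m + l + 1` and
`n ≥ 2m + 1`.  Let `w_c = (sₙ sₙ₋₁ ⋯ s_{m+2}) (s₁ s₂ ⋯ s_m) s_{m+1}`.  Then for every
`1 ≤ k ≤ m + 1` the concatenation of `k` copies of this word is a reduced expression;
in particular `ℓ((w_c)^{m+1}) = n (m + 1)`.  (Simple reflections are `0`-indexed:
`sᵢ` corresponds to `⟨i-1, _⟩ : Fin n`.) -/
theorem reduced_power_of_wc (n m l : ℕ) (hml : m ≤ l) (hn : 2 * m + 1 ≤ n)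
    (hsum : m + l + 1 = n)
    {W : Type*} [Group W] (cs : CoxeterSystem (CoxeterMatrix.Aₙ n) W)
    (wcWord : List (Fin n))
    (hword : wcWord =
      (List.ofFn fun j : Fin (n - m - 1) => (⟨n - 1 - (j : ℕ), by omega⟩ : Fin n)) ++
      (List.ofFn fun j : Fin m => (⟨(j : ℕ), by omega⟩ : Fin n)) ++
      [(⟨m, by omega⟩ : Fin n)]) :
    (∀ k : ℕ, 1 ≤ k → k ≤ m + 1 →
        cs.IsReduced (List.flatten (List.replicate k wcWord))) ∧
    cs.length (cs.wordProd (List.flatten (List.replicate (m + 1) wcWord))) = n * (m + 1) := by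
  classical
  set f : W →* Equiv.Perm (Fin (n + 1)) := cs.lift ⟨RPWC.t, RPWC.liftable n⟩ with hfdef
  have hfs : ∀ i : Fin n, f (cs.simple i) = RPWC.t i :=
    fun i => cs.lift_apply_simple (RPWC.liftable n) i
  have hπ : ∀ ω : List (Fin n), f (cs.wordProd ω) = (ω.map RPWC.t).prod := by
    intro ω
    induction ω with
    | nil => simp
    | cons i ω ih =>
      rw [cs.wordProd_cons, map_mul, hfs, ih, List.map_cons, List.prod_cons]
  have hlen : ∀ ω : List (Fin n), (RPWC.invS ((ω.map RPWC.t).prod)).card ≤ ω.length := by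
    intro ω
    induction ω using List.reverseRecOn with
    | nil => simp [RPWC.invS_one]
    | append_singleton ω i ih =>
      rw [List.map_append, List.prod_append, List.map_singleton, List.prod_singleton,
        List.length_append, List.length_singleton]
      calc (RPWC.invS ((ω.map RPWC.t).prod * RPWC.t i)).card
          ≤ (RPWC.invS ((ω.map RPWC.t).prod)).card + 1 := by
            rw [RPWC.t]
            exact RPWC.invS_mul_swap_le _ i.castSucc i.succ (by simp)
        _ ≤ ω.length + 1 := by omega
  have hlb : ∀ w : W, (RPWC.invS (f w)).card ≤ cs.length w := by
    intro w
    obtain ⟨ω, h1, h2⟩ := cs.exists_reduced_word w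
    calc (RPWC.invS (f w)).card = (RPWC.invS ((ω.map RPWC.t).prod)).card := by rw [h2, hπ]
      _ ≤ ω.length := hlen ω
      _ = cs.length w := by rw [h2]; exact Eq.symm h1
  have hσ1 : ∀ x : Fin (n + 1),
      (((wcWord.map RPWC.t).prod) x : ℕ) = RPWC.g n m 1 (x : ℕ) := by
    intro x
    have hx := x.isLt
    rw [hword, List.map_append, List.map_append, List.prod_append, List.prod_append,
      Equiv.Perm.mul_apply, Equiv.Perm.mul_apply, List.map_singleton, List.prod_singleton]
    simp only [List.map_ofFn, Function.comp_def]
    have h2 := RPWC.descProd (n - m - 1) (by omega)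
      (fun j : Fin (n - m - 1) => (⟨n - 1 - (j : ℕ), by omega⟩ : Fin n)) (fun j => rfl)
    have h1 := RPWC.ascProd m (by omega)
      (fun j : Fin m => (⟨(j : ℕ), by omega⟩ : Fin n)) (fun j => rfl)
    have h0 := RPWC.t_apply (⟨m, by omega⟩ : Fin n) x
    rw [h2, h1, h0]
    simp only [Fin.val_mk]
    unfold RPWC.g
    split_ifs <;> omega
  have hpow : ∀ r : ℕ, r ≤ m + 1 → ∀ x : Fin (n + 1),
      ((((wcWord.map RPWC.t).prod) ^ r) x : ℕ) = RPWC.g n m r (x : ℕ) := by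
    intro r
    induction r with
    | zero =>
      intro _ x
      have hx := x.isLt
      simp only [pow_zero, Equiv.Perm.one_apply]
      unfold RPWC.g; split_ifs <;> omega
    | succ r ih =>
      intro hr x
      have hx := x.isLt
      rw [pow_succ, Equiv.Perm.mul_apply, ih (by omega), hσ1 x]
      exact RPWC.g_comp m r x hn (by omega) (by omega)
  have hwlen : wcWord.length = n := by
    rw [hword]
    simp only [List.length_append, List.length_ofFn, List.length_singleton]
    omega
  have hflat : ∀ k : ℕ, (List.flatten (List.replicate k wcWord)).length = k * n := by
    intro k
    induction k with
    | zero => simp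
    | succ k ih =>
      rw [List.replicate_succ, List.flatten_cons, List.length_append, ih, hwlen]
      ring
  have hπk : ∀ k : ℕ, cs.wordProd (List.flatten (List.replicate k wcWord)) =
      (cs.wordProd wcWord) ^ k := by
    intro k
    induction k with
    | zero => simp
    | succ k ih =>
      rw [List.replicate_succ, List.flatten_cons, cs.wordProd_append, ih, pow_succ']
  have hupper : ∀ k : ℕ, cs.length ((cs.wordProd wcWord) ^ k) ≤ k * n := by
    intro k
    rw [← hπk]
    exact le_of_le_of_eq (cs.length_wordProd_le _) (hflat k)
  have hlower : (m + 1) * n ≤ cs.length ((cs.wordProd wcWord) ^ (m + 1)) := by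
    refine le_trans ?_ (hlb _)
    have hfpow : f ((cs.wordProd wcWord) ^ (m + 1)) = ((wcWord.map RPWC.t).prod) ^ (m + 1) := by
      rw [map_pow, hπ]
    rw [hfpow]
    exact RPWC.inv_lb hn _ (hpow (m + 1) le_rfl)
  have hexact : ∀ k : ℕ, k ≤ m + 1 → cs.length ((cs.wordProd wcWord) ^ k) = k * n := by
    intro k hk
    have h1 := hupper k
    have h2 := hupper (m + 1 - k)
    have h3 : (cs.wordProd wcWord) ^ (m + 1) =
        (cs.wordProd wcWord) ^ k * (cs.wordProd wcWord) ^ (m + 1 - k) := by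
      rw [← pow_add]; congr 1; omega
    have h4 := cs.length_mul_le ((cs.wordProd wcWord) ^ k) ((cs.wordProd wcWord) ^ (m + 1 - k))
    rw [← h3] at h4
    have hmul : (m + 1 - k) * n + k * n = (m + 1) * n := by
      rw [← Nat.add_mul]; congr 1; omega
    omega
  constructor
  · intro k _ hk2
    show cs.length (cs.wordProd (List.flatten (List.replicate k wcWord))) =
      (List.flatten (List.replicate k wcWord)).length
    rw [hπk, hflat, hexact k hk2]
  · rw [hπk, hexact (m + 1) le_rfl]
    exact Nat.mul_comm _ _
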